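/- arXiv:1110.1588 — 4 statements merged into one kernel-verified Lean document; each statement's English description precedes it below -/
import Mathlib

section
/- Lemma 2.4 (Kulik's transformation, case n = 1, formulated for the independent Poisson decomposition used in its proof): for every function φ : ℕ → [0,∞], E[ρ · φ(K)] = ∑_{k∈ℕ} φ(k) · e^{−(τ(s₁)−t₀)a} ((τ(s₁)−t₀)a)^k / k!, where τ(s₁) = t₀ + ((T−t₀)/(T−t₁))(s₁−t₁); that is, under the reweighted measure ρ·P, the law of K is Poisson with rate (τ(s₁)−t₀)·a. -/
open MeasureTheory ProbabilityTheory
open scoped ENNReal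

private lemma kulik_aux_int {Ω : Type*} [MeasurableSpace Ω] (P : Measure Ω)
    (K : Ω → ℕ) (hK : Measurable K) (f : ℕ → ℝ≥0∞) :
    ∫⁻ ω, f (K ω) ∂P = ∑' k, f k * P {ω | K ω = k} := by
  rw [← lintegral_map (measurable_of_countable f) hK, lintegral_countable']
  refine tsum_congr fun k => ?_
  rw [Measure.map_apply hK (measurableSet_singleton k)]
  rfl

private lemma kulik_aux_sum (c r : ℝ) (hc : 0 ≤ c) (hr : 0 ≤ r) :
    ∑' l : ℕ, ENNReal.ofReal (c ^ l) *
        ENNReal.ofReal (Real.exp (-r) * r ^ l / l.factorial) =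
      ENNReal.ofReal (Real.exp (r * (c - 1))) := by
  have hterm : ∀ l : ℕ, ENNReal.ofReal (c ^ l) *
      ENNReal.ofReal (Real.exp (-r) * r ^ l / l.factorial) =
      ENNReal.ofReal (Real.exp (-r) * ((r * c) ^ l / l.factorial)) := by
    intro l
    rw [← ENNReal.ofReal_mul (pow_nonneg hc _)]
    congr 1
    rw [mul_pow]
    ring
  simp_rw [hterm]
  have hnn : ∀ l : ℕ, 0 ≤ Real.exp (-r) * ((r * c) ^ l / l.factorial) := fun l =>
    mul_nonneg (Real.exp_nonneg _)
      (div_nonneg (pow_nonneg (mul_nonneg hr hc) _) (Nat.cast_nonneg _))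
  have hs : Summable (fun l : ℕ => Real.exp (-r) * ((r * c) ^ l / l.factorial)) :=
    (Real.summable_pow_div_factorial (r * c)).mul_left _
  rw [← ENNReal.ofReal_tsum_of_nonneg hnn hs, tsum_mul_left]
  congr 1
  have hexp : ∑' l : ℕ, (r * c) ^ l / (l.factorial : ℝ) = Real.exp (r * c) := by
    rw [Real.exp_eq_exp_ℝ, NormedSpace.exp_eq_tsum_div]
  rw [hexp, ← Real.exp_add]
  congr 1
  ring

/-- Lemma 2.4 (Kulik's transformation, case `n = 1`), formulated for the independent
Poisson decomposition used in its proof: if `K, L, M` are independent Poisson random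
variables with rates `(s₁ - t₁) * a`, `(T - s₁) * a` and `(T - t₁) * b`, respectively,
and `ρ = exp (γ * (K + L + M) - (t₁ - t₀) * (a + b))` with
`γ = log ((T - t₀) / (T - t₁))`, then for every `φ : ℕ → [0,∞]` the reweighted
expectation `E[ρ * φ(K)]` coincides with the expectation of `φ` under the Poisson
distribution of rate `(τ(s₁) - t₀) * a`, where
`τ(s₁) = t₀ + ((T - t₀) / (T - t₁)) * (s₁ - t₁)`. -/
theorem kulik_transformation_n_one
    (T t₀ t₁ s₁ a b : ℝ) (hT : 0 < T)
    (ht₀ : t₀ ∈ Set.Ico (0 : ℝ) T) (ht₁ : t₁ ∈ Set.Ico (0 : ℝ) T)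
    (hs₁ : s₁ ∈ Set.Icc t₁ T) (ha : 0 ≤ a) (hb : 0 ≤ b)
    {Ω : Type*} [MeasurableSpace Ω] (P : Measure Ω) [IsProbabilityMeasure P]
    (K L M : Ω → ℕ) (hK : Measurable K) (hL : Measurable L) (hM : Measurable M)
    (hindep : iIndepFun ![K, L, M] P)
    (hKlaw : ∀ k : ℕ, P {ω | K ω = k} =
      ENNReal.ofReal (Real.exp (-((s₁ - t₁) * a)) * ((s₁ - t₁) * a) ^ k / (Nat.factorial k)))
    (hLlaw : ∀ k : ℕ, P {ω | L ω = k} =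
      ENNReal.ofReal (Real.exp (-((T - s₁) * a)) * ((T - s₁) * a) ^ k / (Nat.factorial k)))
    (hMlaw : ∀ k : ℕ, P {ω | M ω = k} =
      ENNReal.ofReal (Real.exp (-((T - t₁) * b)) * ((T - t₁) * b) ^ k / (Nat.factorial k)))
    (φ : ℕ → ℝ≥0∞) :
    ∫⁻ ω, ENNReal.ofReal
        (Real.exp (Real.log ((T - t₀) / (T - t₁)) * (K ω + L ω + M ω)
          - (t₁ - t₀) * (a + b))) * φ (K ω) ∂P =
      ∑' k : ℕ, φ k *
        ENNReal.ofReal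
          (Real.exp (-(((t₀ + (T - t₀) / (T - t₁) * (s₁ - t₁)) - t₀) * a)) *
            (((t₀ + (T - t₀) / (T - t₁) * (s₁ - t₁)) - t₀) * a) ^ k / (Nat.factorial k)) := by
  have hTt₀ : 0 < T - t₀ := sub_pos.2 ht₀.2
  have hTt₁ : 0 < T - t₁ := sub_pos.2 ht₁.2
  set c : ℝ := (T - t₀) / (T - t₁) with hc_def
  have hc : 0 < c := div_pos hTt₀ hTt₁
  have hexpγ : Real.exp (Real.log c) = c := Real.exp_log hc
  set D : ℝ := (t₁ - t₀) * (a + b) with hD_def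
  set r₁ : ℝ := (s₁ - t₁) * a with hr₁_def
  set r₂ : ℝ := (T - s₁) * a with hr₂_def
  set r₃ : ℝ := (T - t₁) * b with hr₃_def
  have hr₁ : 0 ≤ r₁ := mul_nonneg (sub_nonneg.2 hs₁.1) ha
  have hr₂ : 0 ≤ r₂ := mul_nonneg (sub_nonneg.2 hs₁.2) ha
  have hr₃ : 0 ≤ r₃ := mul_nonneg hTt₁.le hb
  set f₁ : ℕ → ℝ≥0∞ := fun k =>
    ENNReal.ofReal (Real.exp (-D)) * ENNReal.ofReal (c ^ k) * φ k with hf₁_def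
  set g : ℕ → ℝ≥0∞ := fun n => ENNReal.ofReal (c ^ n) with hg_def
  have hpt : ∀ ω, ENNReal.ofReal
      (Real.exp (Real.log c * (K ω + L ω + M ω) - D)) * φ (K ω)
      = (f₁ (K ω) * g (L ω)) * g (M ω) := by
    intro ω
    have h1 : Real.log c * ((K ω : ℝ) + L ω + M ω) - D =
        (-D) + ((K ω : ℝ) * Real.log c + ((L ω : ℝ) * Real.log c +
          (M ω : ℝ) * Real.log c)) := by ring
    rw [h1, Real.exp_add, Real.exp_add, Real.exp_add,
      Real.exp_nat_mul, Real.exp_nat_mul, Real.exp_nat_mul, hexpγ,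
      ENNReal.ofReal_mul (Real.exp_nonneg _),
      ENNReal.ofReal_mul (pow_nonneg hc.le _),
      ENNReal.ofReal_mul (pow_nonneg hc.le _)]
    simp only [hf₁_def, hg_def]
    ring
  rw [lintegral_congr hpt]
  have hmeas3 : ∀ i, Measurable (![K, L, M] i) := by
    intro i
    fin_cases i
    · exact hK
    · exact hL
    · exact hM
  have hKL_M : IndepFun (fun ω => (K ω, L ω)) M P := by
    have := hindep.indepFun_prodMk hmeas3 0 1 2 (by decide) (by decide)
    simpa using this
  have hKL : IndepFun K L P := by
    have := hindep.indepFun (i := 0) (j := 1) (by decide)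
    simpa using this
  have hmeasKL : Measurable fun ω => f₁ (K ω) * g (L ω) :=
    ((measurable_of_countable f₁).comp hK).mul ((measurable_of_countable g).comp hL)
  have hmeasM : Measurable fun ω => g (M ω) := (measurable_of_countable g).comp hM
  have hind1 : IndepFun (fun ω => f₁ (K ω) * g (L ω)) (fun ω => g (M ω)) P := by
    have := hKL_M.comp (φ := fun p : ℕ × ℕ => f₁ p.1 * g p.2) (ψ := g)
      (measurable_of_countable _) (measurable_of_countable _)
    exact this
  have hmK : Measurable fun ω => f₁ (K ω) := (measurable_of_countable f₁).comp hK
  have hmL : Measurable fun ω => g (L ω) := (measurable_of_countable g).comp hL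
  have hind2 : IndepFun (fun ω => f₁ (K ω)) (fun ω => g (L ω)) P :=
    hKL.comp (measurable_of_countable f₁) (measurable_of_countable g)
  rw [lintegral_mul_eq_lintegral_mul_lintegral_of_indepFun'' hmeasKL.aemeasurable
      hmeasM.aemeasurable hind1,
    lintegral_mul_eq_lintegral_mul_lintegral_of_indepFun'' hmK.aemeasurable
      hmL.aemeasurable hind2]
  rw [kulik_aux_int P K hK f₁, kulik_aux_int P L hL g, kulik_aux_int P M hM g]
  simp_rw [hKlaw, hLlaw, hMlaw]
  have hsumL : ∑' l : ℕ, g l * ENNReal.ofReal (Real.exp (-r₂) * r₂ ^ l / l.factorial)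
      = ENNReal.ofReal (Real.exp (r₂ * (c - 1))) := kulik_aux_sum c r₂ hc.le hr₂
  have hsumM : ∑' m : ℕ, g m * ENNReal.ofReal (Real.exp (-r₃) * r₃ ^ m / m.factorial)
      = ENNReal.ofReal (Real.exp (r₃ * (c - 1))) := kulik_aux_sum c r₃ hc.le hr₃
  rw [hsumL, hsumM, mul_assoc, ← ENNReal.ofReal_mul (Real.exp_nonneg _),
    ← Real.exp_add, ← ENNReal.tsum_mul_right]
  refine tsum_congr fun k => ?_
  simp only [hf₁_def]
  rw [mul_assoc, mul_assoc, mul_comm (φ k)]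
  rw [← mul_assoc, ← ENNReal.ofReal_mul (Real.exp_nonneg _)]
  have hrate : (t₀ + c * (s₁ - t₁) - t₀) * a = r₁ * c := by
    rw [hr₁_def]; ring
  have hexps : -D + -r₁ + (r₂ * (c - 1) + r₃ * (c - 1)) = -(r₁ * c) := by
    rw [hD_def, hr₁_def, hr₂_def, hr₃_def, hc_def]
    have hne : T - t₁ ≠ 0 := hTt₁.ne'
    field_simp
    ring
  rw [← ENNReal.ofReal_mul (div_nonneg (mul_nonneg (Real.exp_nonneg _)
      (pow_nonneg hr₁ _)) (Nat.cast_nonneg _)),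
    ← ENNReal.ofReal_mul (mul_nonneg (Real.exp_nonneg _) (pow_nonneg hc.le _)),
    mul_comm]
  congr 1
  have hE : Real.exp (-((t₀ + c * (s₁ - t₁) - t₀) * a)) =
      Real.exp (-D) * Real.exp (-r₁) * Real.exp (r₂ * (c - 1) + r₃ * (c - 1)) := by
    rw [← Real.exp_add, ← Real.exp_add, hexps, hrate]
  congr 1
  rw [hE, hrate, mul_pow r₁ c]
  ring
end

section
/- Lemma 4.1, second estimate: there exists a constant C ≥ 0, depending only on T and δ, such that for all λ ∈ [0,1] and all t₀, t₁ ∈ [0,T−δ], λ·|1 − 1/√τ̇₀| + (1−λ)·|1 − 1/√τ̇₁| ≤ C·λ(1−λ)·|t₀ − t₁|. -/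
lemma sqrt_recip_aux (m x : ℝ) (hm : 0 < m) (hx : m ≤ x) :
    |1 - 1 / Real.sqrt x| ≤ |x - 1| / Real.sqrt m := by
  have hx0 : 0 < x := hm.trans_le hx
  have hsx : 0 < Real.sqrt x := Real.sqrt_pos.mpr hx0
  have hsm : 0 < Real.sqrt m := Real.sqrt_pos.mpr hm
  have h1 : 1 - 1 / Real.sqrt x = (Real.sqrt x - 1) / Real.sqrt x := by
    field_simp
  rw [h1, abs_div, abs_of_pos hsx]
  have hsq : Real.sqrt x ^ 2 = x := Real.sq_sqrt hx0.le
  have h2 : |Real.sqrt x - 1| ≤ |x - 1| := by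
    have : x - 1 = (Real.sqrt x - 1) * (Real.sqrt x + 1) := by nlinarith
    rw [this, abs_mul]
    nlinarith [abs_nonneg (Real.sqrt x - 1), abs_of_pos (show (0:ℝ) < Real.sqrt x + 1 by linarith)]
  have h3 : Real.sqrt m ≤ Real.sqrt x := Real.sqrt_le_sqrt hx
  exact div_le_div₀ (abs_nonneg _) h2 hsm h3

/-- Lemma 4.1, second estimate: there is a constant `C` depending only on `T` and `δ` such
that for all `λ ∈ [0,1]` and all `t₀, t₁ ∈ [0, T - δ]`,
`λ * |1 - 1/√τ̇₀| + (1 - λ) * |1 - 1/√τ̇₁| ≤ C * λ * (1 - λ) * |t₀ - t₁|`, where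
`t_λ = λ t₀ + (1 - λ) t₁` and `τ̇ᵢ = (T - t_λ)/(T - tᵢ)`. -/
theorem two_time_changes_second_estimate (T δ : ℝ) (hT : 0 < T) (hδ : δ ∈ Set.Ioo 0 T) :
    ∃ C : ℝ, 0 ≤ C ∧
      ∀ l ∈ Set.Icc (0 : ℝ) 1, ∀ t₀ ∈ Set.Icc (0 : ℝ) (T - δ), ∀ t₁ ∈ Set.Icc (0 : ℝ) (T - δ),
        l * |1 - 1 / Real.sqrt ((T - (l * t₀ + (1 - l) * t₁)) / (T - t₀))| +
            (1 - l) * |1 - 1 / Real.sqrt ((T - (l * t₀ + (1 - l) * t₁)) / (T - t₁))| ≤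
          C * (l * (1 - l)) * |t₀ - t₁| := by
  obtain ⟨hδ0, hδT⟩ := hδ
  have hm : (0:ℝ) < δ / T := div_pos hδ0 hT
  have hsm : 0 < Real.sqrt (δ / T) := Real.sqrt_pos.mpr hm
  refine ⟨2 / (δ * Real.sqrt (δ / T)), by positivity, ?_⟩
  rintro l ⟨hl0, hl1⟩ t₀ ⟨ht₀0, ht₀T⟩ t₁ ⟨ht₁0, ht₁T⟩
  set tl := l * t₀ + (1 - l) * t₁ with htl
  have htlT : tl ≤ T - δ := by nlinarith
  have hTt₀ : δ ≤ T - t₀ := by linarith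
  have hTt₁ : δ ≤ T - t₁ := by linarith
  have hTt₀' : 0 < T - t₀ := lt_of_lt_of_le hδ0 hTt₀
  have hTt₁' : 0 < T - t₁ := lt_of_lt_of_le hδ0 hTt₁
  have hTtl : δ ≤ T - tl := by linarith
  -- lower bounds on the ratios
  have hx₀ : δ / T ≤ (T - tl) / (T - t₀) := by
    rw [div_le_div_iff₀ hT hTt₀']
    nlinarith
  have hx₁ : δ / T ≤ (T - tl) / (T - t₁) := by
    rw [div_le_div_iff₀ hT hTt₁']
    nlinarith
  have key₀ := sqrt_recip_aux (δ / T) _ hm hx₀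
  have key₁ := sqrt_recip_aux (δ / T) _ hm hx₁
  -- bound |x₀ - 1|
  have hd₀ : |(T - tl) / (T - t₀) - 1| = (1 - l) * |t₀ - t₁| / (T - t₀) := by
    rw [div_sub_one hTt₀'.ne', abs_div, abs_of_pos hTt₀']
    congr 1
    have : T - tl - (T - t₀) = (1 - l) * (t₀ - t₁) := by ring
    rw [this, abs_mul, abs_of_nonneg (by linarith : (0:ℝ) ≤ 1 - l)]
  have hd₁ : |(T - tl) / (T - t₁) - 1| = l * |t₀ - t₁| / (T - t₁) := by
    rw [div_sub_one hTt₁'.ne', abs_div, abs_of_pos hTt₁']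
    congr 1
    have : T - tl - (T - t₁) = l * (t₁ - t₀) := by ring
    rw [this, abs_mul, abs_of_nonneg hl0, abs_sub_comm]
  rw [hd₀] at key₀
  rw [hd₁] at key₁
  have hb₀ : (1 - l) * |t₀ - t₁| / (T - t₀) / Real.sqrt (δ / T)
      ≤ (1 - l) * |t₀ - t₁| / (δ * Real.sqrt (δ / T)) := by
    rw [div_div]
    apply div_le_div_of_nonneg_left (mul_nonneg (by linarith) (abs_nonneg _)) (by positivity)
    apply mul_le_mul_of_nonneg_right hTt₀ hsm.le
  have hb₁ : l * |t₀ - t₁| / (T - t₁) / Real.sqrt (δ / T)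
      ≤ l * |t₀ - t₁| / (δ * Real.sqrt (δ / T)) := by
    rw [div_div]
    apply div_le_div_of_nonneg_left (mul_nonneg hl0 (abs_nonneg _)) (by positivity)
    apply mul_le_mul_of_nonneg_right hTt₁ hsm.le
  have k₀ := key₀.trans hb₀
  have k₁ := key₁.trans hb₁
  have hD : 0 < δ * Real.sqrt (δ / T) := by positivity
  have e₀ : l * |1 - 1 / Real.sqrt ((T - tl) / (T - t₀))|
      ≤ l * ((1 - l) * |t₀ - t₁| / (δ * Real.sqrt (δ / T))) :=
    mul_le_mul_of_nonneg_left k₀ hl0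
  have e₁ : (1 - l) * |1 - 1 / Real.sqrt ((T - tl) / (T - t₁))|
      ≤ (1 - l) * (l * |t₀ - t₁| / (δ * Real.sqrt (δ / T))) :=
    mul_le_mul_of_nonneg_left k₁ (by linarith)
  have : l * ((1 - l) * |t₀ - t₁| / (δ * Real.sqrt (δ / T)))
      + (1 - l) * (l * |t₀ - t₁| / (δ * Real.sqrt (δ / T)))
      = 2 / (δ * Real.sqrt (δ / T)) * (l * (1 - l)) * |t₀ - t₁| := by
    field_simp
    ring
  linarith
end

section
/- Lemma 4.1, third estimate: there exists a constant C ≥ 0, depending only on T and δ, such that for all λ ∈ [0,1] and all t₀, t₁ ∈ [0,T−δ], |λ·(1 − 1/√τ̇₀) + (1−λ)·(1 − 1/√τ̇₁)| ≤ C·λ(1−λ)·|t₀ − t₁|². -/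
/-- Lemma 4.1, third estimate: there is a constant `C` depending only on `T` and `δ` such
that for all `λ ∈ [0,1]` and all `t₀, t₁ ∈ [0, T - δ]`,
`|λ * (1 - 1/√τ̇₀) + (1 - λ) * (1 - 1/√τ̇₁)| ≤ C * λ * (1 - λ) * |t₀ - t₁|²`, where
`t_λ = λ t₀ + (1 - λ) t₁` and `τ̇ᵢ = (T - t_λ)/(T - tᵢ)`. -/
theorem two_time_changes_third_estimate (T δ : ℝ) (hT : 0 < T) (hδ : δ ∈ Set.Ioo 0 T) :
    ∃ C : ℝ, 0 ≤ C ∧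
      ∀ l ∈ Set.Icc (0 : ℝ) 1, ∀ t₀ ∈ Set.Icc (0 : ℝ) (T - δ), ∀ t₁ ∈ Set.Icc (0 : ℝ) (T - δ),
        |l * (1 - 1 / Real.sqrt ((T - (l * t₀ + (1 - l) * t₁)) / (T - t₀))) +
            (1 - l) * (1 - 1 / Real.sqrt ((T - (l * t₀ + (1 - l) * t₁)) / (T - t₁)))| ≤
          C * (l * (1 - l)) * |t₀ - t₁| ^ 2 := by
  obtain ⟨hδ0, hδT⟩ := hδ
  refine ⟨1 / (8 * δ ^ 2), by positivity, ?_⟩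
  rintro l ⟨hl0, hl1⟩ t₀ ⟨ht₀0, ht₀T⟩ t₁ ⟨ht₁0, ht₁T⟩
  have hl1' : (0:ℝ) ≤ 1 - l := by linarith
  set tl := l * t₀ + (1 - l) * t₁ with htl
  have ha : δ ≤ T - t₀ := by linarith
  have hb : δ ≤ T - t₁ := by linarith
  have hmδ : δ ≤ T - tl := by nlinarith
  have ha0 : (0:ℝ) < T - t₀ := by linarith
  have hb0 : (0:ℝ) < T - t₁ := by linarith
  have hm0 : (0:ℝ) < T - tl := by linarith
  rw [Real.sqrt_div hm0.le, Real.sqrt_div hm0.le, one_div_div, one_div_div]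
  set sa := Real.sqrt (T - t₀) with hsa
  set sb := Real.sqrt (T - t₁) with hsb
  set sm := Real.sqrt (T - tl) with hsm
  set sd := Real.sqrt δ with hsd
  have hsd0 : 0 < sd := Real.sqrt_pos.mpr hδ0
  have hsd2 : sd ^ 2 = δ := Real.sq_sqrt hδ0.le
  have hsa2 : sa ^ 2 = T - t₀ := Real.sq_sqrt ha0.le
  have hsb2 : sb ^ 2 = T - t₁ := Real.sq_sqrt hb0.le
  have hsm2 : sm ^ 2 = T - tl := Real.sq_sqrt hm0.le
  have hsad : sd ≤ sa := Real.sqrt_le_sqrt ha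
  have hsbd : sd ≤ sb := Real.sqrt_le_sqrt hb
  have hsmd : sd ≤ sm := Real.sqrt_le_sqrt hmδ
  have hsa0 : 0 < sa := lt_of_lt_of_le hsd0 hsad
  have hsb0 : 0 < sb := lt_of_lt_of_le hsd0 hsbd
  have hsm0 : 0 < sm := lt_of_lt_of_le hsd0 hsmd
  set w := l * sa + (1 - l) * sb with hw
  have hwd : sd ≤ w := by nlinarith
  have hw0 : 0 < w := lt_of_lt_of_le hsd0 hwd
  have hsm2' : sm ^ 2 = l * sa ^ 2 + (1 - l) * sb ^ 2 := by
    rw [hsm2, hsa2, hsb2, htl]; ring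
  have hkey : (sm - w) * (sm + w) = l * (1 - l) * (sa - sb) ^ 2 := by
    rw [hw]; linear_combination hsm2'
  clear_value w sa sb sm sd tl
  have hsmw : 0 ≤ sm - w := by
    by_contra h
    push_neg at h
    nlinarith [add_pos hsm0 hw0, mul_nonneg (mul_nonneg hl0 hl1') (sq_nonneg (sa - sb))]
  have hE : l * (1 - sa / sm) + (1 - l) * (1 - sb / sm) = (sm - w) / sm := by
    rw [hw]
    field_simp
    ring
  rw [hE, abs_of_nonneg (div_nonneg hsmw hsm0.le)]
  have habs : |t₀ - t₁| ^ 2 = (sa ^ 2 - sb ^ 2) ^ 2 := by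
    rw [sq_abs, hsa2, hsb2]; ring
  rw [habs, ← hsd2, div_le_iff₀ hsm0, div_mul_eq_mul_div, div_mul_eq_mul_div,
    div_mul_eq_mul_div, le_div_iff₀ (by positivity)]
  -- goal is now (up to ring normalization):
  -- (sm - w) * (8 * (sd^2)^2) ≤ 1 * (l * (1 - l)) * (sa^2 - sb^2)^2 * sm
  have h1 : 4 * sd ^ 2 ≤ (sa + sb) ^ 2 := by
    have h2sd : 2 * sd ≤ sa + sb := by linarith
    calc 4 * sd ^ 2 = (2 * sd) ^ 2 := by ring
      _ ≤ (sa + sb) ^ 2 := pow_le_pow_left₀ (by positivity) h2sd 2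
  have h2 : 2 * sd ^ 2 ≤ (sm + w) * sm := by
    calc 2 * sd ^ 2 = (2 * sd) * sd := by ring
      _ ≤ (sm + w) * sm := mul_le_mul (by linarith) hsmd hsd0.le (by positivity)
  have h3 : 8 * sd ^ 4 ≤ (sa + sb) ^ 2 * ((sm + w) * sm) := by
    calc 8 * sd ^ 4 = 4 * sd ^ 2 * (2 * sd ^ 2) := by ring
      _ ≤ (sa + sb) ^ 2 * ((sm + w) * sm) :=
        mul_le_mul h1 h2 (by positivity) (by positivity)
  have hX : 0 ≤ l * (1 - l) * (sa - sb) ^ 2 := by positivity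
  have h4 : l * (1 - l) * (sa - sb) ^ 2 * (8 * sd ^ 4) ≤
      l * (1 - l) * (sa - sb) ^ 2 * ((sa + sb) ^ 2 * ((sm + w) * sm)) :=
    mul_le_mul_of_nonneg_left h3 hX
  have hfin : ((sm - w) * (8 * sd ^ 4)) * (sm + w) ≤
      ((l * (1 - l)) * (sa ^ 2 - sb ^ 2) ^ 2 * sm) * (sm + w) := by
    calc ((sm - w) * (8 * sd ^ 4)) * (sm + w)
        = l * (1 - l) * (sa - sb) ^ 2 * (8 * sd ^ 4) := by linear_combination (8 * sd ^ 4) * hkey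
      _ ≤ l * (1 - l) * (sa - sb) ^ 2 * ((sa + sb) ^ 2 * ((sm + w) * sm)) := h4
      _ = ((l * (1 - l)) * (sa ^ 2 - sb ^ 2) ^ 2 * sm) * (sm + w) := by ring
  have h5 : (sm - w) * (8 * sd ^ 4) ≤ (l * (1 - l)) * (sa ^ 2 - sb ^ 2) ^ 2 * sm :=
    le_of_mul_le_mul_right hfin (add_pos hsm0 hw0)
  linarith [h5]
end

section
/- Second-order Taylor-type inequality for powers of the norm (the pointwise estimate used in the proof of Lemma 3.3): for every real p ≥ 2 there exists a constant C_p ≥ 0 such that for all x, y in a real inner product space (e.g. ℝ^d), ‖x+y‖^p − ‖x‖^p − p·‖x‖^{p−2}·⟨x, y⟩ ≤ C_p·(‖y‖²·‖x‖^{p−2} + ‖y‖^p). -/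
open scoped RealInnerProductSpace

/-- Convex tangent-line inequality for `rpow`, `r ≥ 1`. -/
lemma rpow_tangent_le {r A B : ℝ} (hr : 1 ≤ r) (hA : 0 < A) (hB : 0 ≤ B) :
    A ^ r + r * A ^ (r - 1) * (B - A) ≤ B ^ r := by
  have hs : -1 ≤ B / A - 1 := by
    have : 0 ≤ B / A := div_nonneg hB hA.le
    linarith
  have key := one_add_mul_self_le_rpow_one_add hs hr
  have h1 : 1 + (B / A - 1) = B / A := by ring
  rw [h1, Real.div_rpow hB hA.le] at key
  have hAr : 0 < A ^ r := Real.rpow_pos_of_pos hA r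
  have h3 : A ^ (r - 1) = A ^ r / A := by
    rw [Real.rpow_sub hA, Real.rpow_one]
  have key2 := mul_le_mul_of_nonneg_left key hAr.le
  calc A ^ r + r * A ^ (r - 1) * (B - A)
      = A ^ r * (1 + r * (B / A - 1)) := by rw [h3]; field_simp
    _ ≤ A ^ r * (B ^ r / A ^ r) := key2
    _ = B ^ r := by field_simp

/-- Concave tangent-line inequality for `rpow`, `0 ≤ r ≤ 1`. -/
lemma rpow_tangent_ge {r A B : ℝ} (hr0 : 0 ≤ r) (hr1 : r ≤ 1) (hA : 0 < A) (hB : 0 ≤ B) :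
    B ^ r ≤ A ^ r + r * A ^ (r - 1) * (B - A) := by
  have hs : -1 ≤ B / A - 1 := by
    have : 0 ≤ B / A := div_nonneg hB hA.le
    linarith
  have key := rpow_one_add_le_one_add_mul_self hs hr0 hr1
  have h1 : 1 + (B / A - 1) = B / A := by ring
  rw [h1, Real.div_rpow hB hA.le] at key
  have hAr : 0 < A ^ r := Real.rpow_pos_of_pos hA r
  have h3 : A ^ (r - 1) = A ^ r / A := by
    rw [Real.rpow_sub hA, Real.rpow_one]
  have key2 := mul_le_mul_of_nonneg_left key hAr.le
  calc B ^ r = A ^ r * (B ^ r / A ^ r) := by field_simp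
    _ ≤ A ^ r * (1 + r * (B / A - 1)) := key2
    _ = A ^ r + r * A ^ (r - 1) * (B - A) := by rw [h3]; field_simp

private lemma side_helper {x c d u C : ℝ} (h : x ≤ c * d) (hd : d ≤ u) (hu : 0 ≤ u)
    (hc0 : 0 ≤ c) (hcC : c ≤ C) : x ≤ C * u :=
  (h.trans (mul_le_mul_of_nonneg_left hd hc0)).trans (mul_le_mul_of_nonneg_right hcC hu)

/-- Lipschitz-type bound for `rpow` with exponent `q-1` on the interval `[s/4, 9s/4]`. -/
lemma rpow_lipschitz {q s N : ℝ} (hq : 1 ≤ q) (hs : 0 < s)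
    (hlb : s / 4 ≤ N) (hub : N ≤ 9 / 4 * s) :
    |N ^ (q - 1) - s ^ (q - 1)| ≤ q * 4 ^ q * s ^ (q - 2) * |N - s| := by
  have hN : 0 < N := lt_of_lt_of_le (by linarith) hlb
  have hu0 : 0 ≤ |N - s| := abs_nonneg _
  have hd1 : N - s ≤ |N - s| := le_abs_self _
  have hd2 : s - N ≤ |N - s| := by rw [abs_sub_comm]; exact le_abs_self _
  have hsq2 : (0:ℝ) ≤ s ^ (q - 2) := Real.rpow_nonneg hs.le _
  have h4q : (4:ℝ) ≤ 4 ^ q := by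
    calc (4:ℝ) = 4 ^ (1:ℝ) := (Real.rpow_one 4).symm
      _ ≤ 4 ^ q := Real.rpow_le_rpow_of_exponent_le (by norm_num) hq
  have hK0 : 0 ≤ q * 4 ^ q * s ^ (q - 2) := by
    have : (0:ℝ) ≤ 4 ^ q := le_trans (by norm_num) h4q
    positivity
  have e12 : q - 1 - 1 = q - 2 := by ring
  rw [abs_sub_le_iff]
  rcases le_or_gt q 2 with h2 | h2
  · -- concave case: q - 1 ≤ 1
    have hr0 : 0 ≤ q - 1 := by linarith
    have hr1 : q - 1 ≤ 1 := by linarith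
    have hq4 : 0 < s / 4 := by linarith
    -- rewrite (s/4)^(q-2)
    have hsf : (s / 4) ^ (q - 2) = 4 ^ (2 - q) * s ^ (q - 2) := by
      rw [Real.div_rpow hs.le (by norm_num : (0:ℝ) ≤ 4),
        show (2:ℝ) - q = -(q - 2) by ring, Real.rpow_neg (by norm_num : (0:ℝ) ≤ 4),
        div_eq_mul_inv, mul_comm]
    have hA : 4 ^ (2 - q) ≤ (4:ℝ) ^ q :=
      Real.rpow_le_rpow_of_exponent_le (by norm_num) (by linarith)
    have hA0 : (0:ℝ) ≤ 4 ^ (2 - q) := Real.rpow_nonneg (by norm_num) _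
    constructor
    · -- N^r - s^r ≤ K |u|, tangent at s
      have c2 := rpow_tangent_ge hr0 hr1 hs hN.le
      rw [e12] at c2
      refine side_helper (c := (q - 1) * s ^ (q - 2)) (by linarith) hd1 hu0 ?_ ?_
      · positivity
      · nlinarith [mul_le_mul_of_nonneg_right h4q hsq2]
    · -- s^r - N^r ≤ K |u|, tangent at N
      have c1 := rpow_tangent_ge hr0 hr1 hN hs.le
      rw [e12] at c1
      have bN : N ^ (q - 2) ≤ (s / 4) ^ (q - 2) :=
        Real.rpow_le_rpow_of_nonpos hq4 hlb (by linarith)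
      rw [hsf] at bN
      have hN0 : (0:ℝ) ≤ N ^ (q - 2) := Real.rpow_nonneg hN.le _
      refine side_helper (c := (q - 1) * N ^ (q - 2)) (by linarith) hd2 hu0 ?_ ?_
      · positivity
      · calc (q - 1) * N ^ (q - 2) ≤ (q - 1) * (4 ^ (2 - q) * s ^ (q - 2)) :=
              mul_le_mul_of_nonneg_left bN hr0
          _ ≤ q * (4 ^ q * s ^ (q - 2)) := by
              refine mul_le_mul (by linarith) ?_ (by positivity) (by linarith)
              exact mul_le_mul_of_nonneg_right hA hsq2
          _ = q * 4 ^ q * s ^ (q - 2) := by ring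
  · -- convex case: q - 1 ≥ 1
    have hr : 1 ≤ q - 1 := by linarith
    have bN : N ^ (q - 2) ≤ (9 / 4 * s) ^ (q - 2) :=
      Real.rpow_le_rpow hN.le hub (by linarith)
    have hsf : (9 / 4 * s) ^ (q - 2) = (9/4 : ℝ) ^ (q - 2) * s ^ (q - 2) :=
      Real.mul_rpow (by norm_num) hs.le
    rw [hsf] at bN
    have hA : (9/4 : ℝ) ^ (q - 2) ≤ 4 ^ q := by
      calc (9/4 : ℝ) ^ (q - 2) ≤ 4 ^ (q - 2) :=
            Real.rpow_le_rpow (by norm_num) (by norm_num) (by linarith)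
        _ ≤ 4 ^ q := Real.rpow_le_rpow_of_exponent_le (by norm_num) (by linarith)
    have hN0 : (0:ℝ) ≤ N ^ (q - 2) := Real.rpow_nonneg hN.le _
    constructor
    · -- tangent at N
      have c1 := rpow_tangent_le hr hN hs.le
      rw [e12] at c1
      refine side_helper (c := (q - 1) * N ^ (q - 2)) (by linarith) hd1 hu0 ?_ ?_
      · positivity
      · calc (q - 1) * N ^ (q - 2) ≤ (q - 1) * ((9/4 : ℝ) ^ (q - 2) * s ^ (q - 2)) :=
              mul_le_mul_of_nonneg_left bN (by linarith)
          _ ≤ q * (4 ^ q * s ^ (q - 2)) := by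
              refine mul_le_mul (by linarith) ?_ (by positivity) (by linarith)
              exact mul_le_mul_of_nonneg_right hA hsq2
          _ = q * 4 ^ q * s ^ (q - 2) := by ring
    · -- tangent at s
      have c2 := rpow_tangent_le hr hs hN.le
      rw [e12] at c2
      refine side_helper (c := (q - 1) * s ^ (q - 2)) (by linarith) hd2 hu0 ?_ ?_
      · positivity
      · nlinarith [mul_le_mul_of_nonneg_right h4q hsq2]

/-- Abstract second-order estimate for `rpow` on the real line. -/
lemma abstract_estimate {q N s B : ℝ} (hq1 : 1 ≤ q) (hs : 0 < s) (hN : 0 < N)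
    (hlb : s / 4 ≤ N) (hub : N ≤ 9 / 4 * s) (hB : 0 ≤ B)
    (hu2 : (N - s) ^ 2 ≤ 25 / 4 * (s * B)) :
    N ^ q - s ^ q - q * s ^ (q - 1) * (N - s) ≤
      25 / 4 * q ^ 2 * 4 ^ q * (s ^ (q - 1) * B) := by
  have T := rpow_tangent_le hq1 hN hs.le
  have hT : N ^ q - s ^ q ≤ q * N ^ (q - 1) * (N - s) := by nlinarith [T]
  have lip := rpow_lipschitz hq1 hs hlb hub
  have hsq2 : (0:ℝ) ≤ s ^ (q - 2) := Real.rpow_nonneg hs.le _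
  have h4q : (0:ℝ) ≤ 4 ^ q := Real.rpow_nonneg (by norm_num) _
  have hq0 : (0:ℝ) ≤ q := by linarith
  have hD : (N - s) * (N ^ (q - 1) - s ^ (q - 1)) ≤
      (q * 4 ^ q * s ^ (q - 2)) * (N - s) ^ 2 := by
    calc (N - s) * (N ^ (q - 1) - s ^ (q - 1))
        ≤ |(N - s) * (N ^ (q - 1) - s ^ (q - 1))| := le_abs_self _
      _ = |N - s| * |N ^ (q - 1) - s ^ (q - 1)| := abs_mul _ _
      _ ≤ |N - s| * (q * 4 ^ q * s ^ (q - 2) * |N - s|) :=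
          mul_le_mul_of_nonneg_left lip (abs_nonneg _)
      _ = (q * 4 ^ q * s ^ (q - 2)) * (|N - s| * |N - s|) := by ring
      _ = (q * 4 ^ q * s ^ (q - 2)) * (N - s) ^ 2 := by
          rw [← abs_mul, ← sq, abs_of_nonneg (sq_nonneg _)]
  have hE : N ^ q - s ^ q - q * s ^ (q - 1) * (N - s) ≤
      q * ((q * 4 ^ q * s ^ (q - 2)) * (N - s) ^ 2) := by
    have hDq := mul_le_mul_of_nonneg_left hD hq0
    have e : q * ((N - s) * (N ^ (q - 1) - s ^ (q - 1))) =
        q * N ^ (q - 1) * (N - s) - q * s ^ (q - 1) * (N - s) := by ring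
    linarith [hDq, hT, e]
  have hstep : s ^ (q - 2) * s = s ^ (q - 1) := by
    rw [show q - 1 = (q - 2) + 1 by ring, Real.rpow_add hs, Real.rpow_one]
  have h1 : q * ((q * 4 ^ q * s ^ (q - 2)) * (N - s) ^ 2) ≤
      q * ((q * 4 ^ q * s ^ (q - 2)) * (25 / 4 * (s * B))) := by
    refine mul_le_mul_of_nonneg_left (mul_le_mul_of_nonneg_left hu2 ?_) hq0
    positivity
  have h2 : q * ((q * 4 ^ q * s ^ (q - 2)) * (25 / 4 * (s * B))) =
      25 / 4 * q ^ 2 * 4 ^ q * ((s ^ (q - 2) * s) * B) := by ring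
  rw [h2, hstep] at h1
  exact (hE.trans h1)

set_option maxHeartbeats 1000000 in
/-- The scalar core estimate, in the nondegenerate regime `0 < a`, `2b ≤ a`. -/
lemma core_estimate {p q a b t n : ℝ} (hp : 2 ≤ p) (hq : q = p / 2)
    (ha : 0 < a) (hb : 0 ≤ b) (hba : 2 * b ≤ a) (ht : |t| ≤ a * b)
    (hn : 0 ≤ n) (hn2 : n ^ 2 = a ^ 2 + 2 * t + b ^ 2)
    (hnl : a - b ≤ n) (hnu : n ≤ a + b) :
    n ^ p - a ^ p - p * a ^ (p - 2) * t ≤ (7 * p ^ 2 * 4 ^ p + p) * (b ^ 2 * a ^ (p - 2)) := by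
  have hq1 : 1 ≤ q := by rw [hq]; linarith
  have hs : (0:ℝ) < a ^ 2 := by positivity
  have hnpos : 0 < n := lt_of_lt_of_le (by linarith) hnl
  have hNpos : (0:ℝ) < n ^ 2 := by positivity
  have hlb : a ^ 2 / 4 ≤ n ^ 2 := by nlinarith
  have hub : n ^ 2 ≤ 9 / 4 * a ^ 2 := by nlinarith
  have hu_abs : |n ^ 2 - a ^ 2| ≤ 5 / 2 * (a * b) := by
    have e : n ^ 2 - a ^ 2 = 2 * t + b ^ 2 := by linarith
    rw [e]
    have h1 : |2 * t + b ^ 2| ≤ |2 * t| + |b ^ 2| := abs_add_le _ _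
    have h2 : |2 * t| = 2 * |t| := by rw [abs_mul]; norm_num
    have h3 : |b ^ 2| = b ^ 2 := abs_of_nonneg (by positivity)
    nlinarith
  have hu2 : (n ^ 2 - a ^ 2) ^ 2 ≤ 25 / 4 * (a ^ 2 * b ^ 2) := by
    nlinarith [abs_nonneg (n ^ 2 - a ^ 2), sq_abs (n ^ 2 - a ^ 2)]
  have key := abstract_estimate hq1 hs hNpos hlb hub (by positivity : (0:ℝ) ≤ b ^ 2) hu2
  -- rpow conversions
  have conv : ∀ m : ℝ, 0 ≤ m → m ^ p = (m ^ 2) ^ q := by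
    intro m hm
    rw [← Real.rpow_natCast m 2, ← Real.rpow_mul hm]
    congr 1
    push_cast
    rw [hq]; ring
  have conv2 : a ^ (p - 2) = (a ^ 2) ^ (q - 1) := by
    rw [← Real.rpow_natCast a 2, ← Real.rpow_mul ha.le]
    congr 1
    push_cast
    rw [hq]; ring
  rw [conv n hn, conv a ha.le, conv2]
  -- rewrite the linear term
  have e1 : q * (a ^ 2) ^ (q - 1) * (n ^ 2 - a ^ 2) =
      q * (a ^ 2) ^ (q - 1) * (2 * t + b ^ 2) := by
    rw [hn2]; ring
  have e2 : q * (a ^ 2) ^ (q - 1) * (2 * t + b ^ 2) =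
      p * (a ^ 2) ^ (q - 1) * t + q * (a ^ 2) ^ (q - 1) * b ^ 2 := by
    rw [hq]; ring
  -- coefficient comparison
  have h44 : (4:ℝ) ^ q ≤ 4 ^ p :=
    Real.rpow_le_rpow_of_exponent_le (by norm_num) (by rw [hq]; linarith)
  have h4q : (0:ℝ) ≤ 4 ^ q := Real.rpow_nonneg (by norm_num) _
  have h4p : (0:ℝ) ≤ 4 ^ p := Real.rpow_nonneg (by norm_num) _
  have hq0 : (0:ℝ) ≤ q := by linarith
  have hqp : q ≤ p := by rw [hq]; linarith
  have hsq1 : (0:ℝ) ≤ (a ^ 2) ^ (q - 1) := Real.rpow_nonneg hs.le _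
  have hX : (0:ℝ) ≤ (a ^ 2) ^ (q - 1) * b ^ 2 := by positivity
  have hcoef : 25 / 4 * q ^ 2 * 4 ^ q + q ≤ 7 * p ^ 2 * 4 ^ p + p := by
    have m1 : q ^ 2 * 4 ^ q ≤ p ^ 2 * 4 ^ p := by
      refine mul_le_mul (by nlinarith) h44 h4q (sq_nonneg p)
    have m2 : (0:ℝ) ≤ p ^ 2 * 4 ^ p := mul_nonneg (sq_nonneg p) h4p
    linarith
  have hmul := mul_le_mul_of_nonneg_right hcoef hX
  have e3 : q * (a ^ 2) ^ (q - 1) * b ^ 2 = q * ((a ^ 2) ^ (q - 1) * b ^ 2) := by ring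
  have e4 : 25 / 4 * q ^ 2 * 4 ^ q * ((a ^ 2) ^ (q - 1) * b ^ 2) +
        q * ((a ^ 2) ^ (q - 1) * b ^ 2) =
      (25 / 4 * q ^ 2 * 4 ^ q + q) * ((a ^ 2) ^ (q - 1) * b ^ 2) := by ring
  have e5 : (7 * p ^ 2 * 4 ^ p + p) * (b ^ 2 * (a ^ 2) ^ (q - 1)) =
      (7 * p ^ 2 * 4 ^ p + p) * ((a ^ 2) ^ (q - 1) * b ^ 2) := by ring
  linarith [key, hmul, e1, e2, e3, e4, e5]

set_option maxHeartbeats 1000000 in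
/-- Second-order Taylor-type inequality for real powers of the norm (the pointwise
estimate used in the proof of Lemma 3.3): for every real `p ≥ 2` there is a constant
`C_p ≥ 0` such that, in a real inner product space,
`‖x+y‖^p - ‖x‖^p - p ‖x‖^(p-2) ⟪x, y⟫ ≤ C_p (‖y‖² ‖x‖^(p-2) + ‖y‖^p)`. -/
theorem norm_rpow_taylor_estimate (H : Type*) [NormedAddCommGroup H]
    [InnerProductSpace ℝ H] (p : ℝ) (hp : 2 ≤ p) :
    ∃ C : ℝ, 0 ≤ C ∧ ∀ x y : H,
      ‖x + y‖ ^ p - ‖x‖ ^ p - p * ‖x‖ ^ (p - 2) * ⟪x, y⟫ ≤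
        C * (‖y‖ ^ (2 : ℝ) * ‖x‖ ^ (p - 2) + ‖y‖ ^ p) := by
  have hp0 : (0:ℝ) < p := by linarith
  have h4p : (0:ℝ) ≤ 4 ^ p := Real.rpow_nonneg (by norm_num) _
  have h3p : (0:ℝ) ≤ 3 ^ p := Real.rpow_nonneg (by norm_num) _
  refine ⟨3 ^ p + 3 * p + 7 * p ^ 2 * 4 ^ p, by positivity, fun x y => ?_⟩
  have ha0 : (0:ℝ) ≤ ‖x‖ := norm_nonneg x
  have hb0 : (0:ℝ) ≤ ‖y‖ := norm_nonneg y
  have ht : |(⟪x, y⟫ : ℝ)| ≤ ‖x‖ * ‖y‖ := abs_real_inner_le_norm x y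
  have hb2 : ‖y‖ ^ (2:ℝ) = ‖y‖ ^ 2 := by
    rw [show (2:ℝ) = ((2:ℕ):ℝ) by norm_num, Real.rpow_natCast]
  have hap2 : (0:ℝ) ≤ ‖x‖ ^ (p - 2) := Real.rpow_nonneg ha0 _
  have hbp : (0:ℝ) ≤ ‖y‖ ^ p := Real.rpow_nonneg hb0 _
  have hxy_le : ‖x + y‖ ≤ ‖x‖ + ‖y‖ := norm_add_le x y
  rw [hb2]
  by_cases hab : ‖x‖ < 2 * ‖y‖
  · -- large-y case
    have hb_pos : (0:ℝ) < ‖y‖ := by linarith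
    have h1 : ‖x + y‖ ^ p ≤ (3 * ‖y‖) ^ p :=
      Real.rpow_le_rpow (norm_nonneg _) (by linarith) hp0.le
    have h2 : (3 * ‖y‖) ^ p = 3 ^ p * ‖y‖ ^ p := Real.mul_rpow (by norm_num) hb0
    have hap : (0:ℝ) ≤ ‖x‖ ^ p := Real.rpow_nonneg ha0 _
    have h3 : -(p * ‖x‖ ^ (p - 2) * ⟪x, y⟫) ≤ p * ‖x‖ ^ (p - 2) * (2 * ‖y‖ * ‖y‖) := by
      have habs : -(⟪x, y⟫ : ℝ) ≤ ‖x‖ * ‖y‖ := by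
        have := abs_le.mp ht; linarith [this.1]
      have hc : (0:ℝ) ≤ p * ‖x‖ ^ (p - 2) := by positivity
      have h4 : ‖x‖ * ‖y‖ ≤ 2 * ‖y‖ * ‖y‖ := by nlinarith
      calc -(p * ‖x‖ ^ (p - 2) * ⟪x, y⟫) = p * ‖x‖ ^ (p - 2) * (-⟪x, y⟫) := by ring
        _ ≤ p * ‖x‖ ^ (p - 2) * (‖x‖ * ‖y‖) := mul_le_mul_of_nonneg_left habs hc
        _ ≤ p * ‖x‖ ^ (p - 2) * (2 * ‖y‖ * ‖y‖) := mul_le_mul_of_nonneg_left h4 hc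
    rw [h2] at h1
    have k1 : 3 ^ p * ‖y‖ ^ p ≤ (3 ^ p + 3 * p + 7 * p ^ 2 * 4 ^ p) * ‖y‖ ^ p := by
      refine mul_le_mul_of_nonneg_right ?_ hbp
      nlinarith [sq_nonneg p]
    have k2 : p * ‖x‖ ^ (p - 2) * (2 * ‖y‖ * ‖y‖) ≤
        (3 ^ p + 3 * p + 7 * p ^ 2 * 4 ^ p) * (‖y‖ ^ 2 * ‖x‖ ^ (p - 2)) := by
      have e : p * ‖x‖ ^ (p - 2) * (2 * ‖y‖ * ‖y‖) = 2 * p * (‖y‖ ^ 2 * ‖x‖ ^ (p - 2)) := by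
        ring
      rw [e]
      refine mul_le_mul_of_nonneg_right ?_ (by positivity)
      nlinarith [sq_nonneg p]
    have e4 : (3 ^ p + 3 * p + 7 * p ^ 2 * 4 ^ p) * (‖y‖ ^ 2 * ‖x‖ ^ (p - 2) + ‖y‖ ^ p) =
        (3 ^ p + 3 * p + 7 * p ^ 2 * 4 ^ p) * (‖y‖ ^ 2 * ‖x‖ ^ (p - 2)) +
          (3 ^ p + 3 * p + 7 * p ^ 2 * 4 ^ p) * ‖y‖ ^ p := by ring
    linarith [h1, h3, k1, k2, hap, e4]
  · -- small-y case
    push_neg at hab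
    rcases eq_or_lt_of_le ha0 with ha | ha
    · -- ‖x‖ = 0, hence y = 0 as well
      have hb_eq : ‖y‖ = 0 := by linarith
      have hx0 : x = 0 := norm_eq_zero.mp ha.symm
      have hy0 : y = 0 := norm_eq_zero.mp hb_eq
      subst hx0; subst hy0
      simp only [add_zero, inner_zero_right, mul_zero, norm_zero, sub_zero]
      rw [Real.zero_rpow hp0.ne']
      simp
    · -- 0 < ‖x‖
      have hn2 : ‖x + y‖ ^ 2 = ‖x‖ ^ 2 + 2 * ⟪x, y⟫ + ‖y‖ ^ 2 := norm_add_sq_real x y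
      have hnl : ‖x‖ - ‖y‖ ≤ ‖x + y‖ := by
        have h5 : ‖x‖ ≤ ‖x + y‖ + ‖y‖ := by
          calc ‖x‖ = ‖x + y + -y‖ := by rw [add_neg_cancel_right]
            _ ≤ ‖x + y‖ + ‖-y‖ := norm_add_le _ _
            _ = ‖x + y‖ + ‖y‖ := by rw [norm_neg]
        linarith
      have key := core_estimate hp rfl ha hb0 hab ht (norm_nonneg (x + y)) hn2 hnl hxy_le
      have hC : (0:ℝ) ≤ 3 ^ p + 3 * p + 7 * p ^ 2 * 4 ^ p := by positivity
      have k1 : (7 * p ^ 2 * 4 ^ p + p) * (‖y‖ ^ 2 * ‖x‖ ^ (p - 2)) ≤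
          (3 ^ p + 3 * p + 7 * p ^ 2 * 4 ^ p) * (‖y‖ ^ 2 * ‖x‖ ^ (p - 2)) := by
        refine mul_le_mul_of_nonneg_right (by linarith) (by positivity)
      have k2 : (0:ℝ) ≤ (3 ^ p + 3 * p + 7 * p ^ 2 * 4 ^ p) * ‖y‖ ^ p := mul_nonneg hC hbp
      have e4 : (3 ^ p + 3 * p + 7 * p ^ 2 * 4 ^ p) * (‖y‖ ^ 2 * ‖x‖ ^ (p - 2) + ‖y‖ ^ p) =
          (3 ^ p + 3 * p + 7 * p ^ 2 * 4 ^ p) * (‖y‖ ^ 2 * ‖x‖ ^ (p - 2)) +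
            (3 ^ p + 3 * p + 7 * p ^ 2 * 4 ^ p) * ‖y‖ ^ p := by ring
      linarith [key, k1, k2, e4]
end
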